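/- arXiv:1202.3972 — 3 statements merged into one kernel-verified Lean document; each statement's English description precedes it below -/
import Mathlib

section
/- In the semidihedral group SD_{8n}, for every integer r, the conjugacy class of a^r is exactly {a^r, a^{(2n-1)r}}. -/
/-- In the semidihedral group `SD_{8n}`, for every integer `r`, the conjugacy class of `a^r`
is exactly `{a^r, a^{(2n-1)r}}`. -/
theorem sd8n_conjClass_apow {G : Type*} [Group G] (n : ℕ) (hn : 2 ≤ n) (a b : G)
    (ha : a ^ (4 * n) = 1) (hb : b ^ 2 = 1) (hrel : b * a * b = a ^ (2 * n - 1))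
    (hgen : Subgroup.closure ({a, b} : Set G) = ⊤) :
    ∀ r : ℤ, {x : G | ∃ g : G, x = g * a ^ r * g⁻¹} =
      ({a ^ r, a ^ ((2 * (n : ℤ) - 1) * r)} : Set G) := by
  intro r
  have hb' : b⁻¹ = b := by
    have : b * b = 1 := by rw [← sq]; exact hb
    exact inv_eq_of_mul_eq_one_right this
  have ha' : ∀ m : ℤ, a ^ ((4 * (n : ℤ)) * m) = 1 := by
    intro m
    have h4 : a ^ ((4 * n : ℕ) : ℤ) = 1 := by rw [zpow_natCast, ha]
    rw [zpow_mul]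
    have : ((4 * n : ℕ) : ℤ) = 4 * (n : ℤ) := by push_cast; ring
    rw [← this, h4, one_zpow]
  have key1 : ∀ t : ℤ, b * a ^ t * b⁻¹ = a ^ ((2 * (n : ℤ) - 1) * t) := by
    intro t
    have h1 : b * a * b⁻¹ = a ^ (2 * (n : ℤ) - 1) := by
      rw [hb', hrel]
      have : ((2 * n - 1 : ℕ) : ℤ) = 2 * (n : ℤ) - 1 := by omega
      rw [← this, zpow_natCast]
    have h2 : (MulAut.conj b) (a ^ t) = ((MulAut.conj b) a) ^ t := map_zpow _ _ _
    simp only [MulAut.conj_apply] at h2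
    rw [h2, h1, ← zpow_mul, mul_comm]
  set s : ℤ := (2 * (n : ℤ) - 1) * r with hs
  have key2 : a ^ ((2 * (n : ℤ) - 1) * s) = a ^ r := by
    have hx : (2 * (n : ℤ) - 1) * s = (4 * (n : ℤ)) * ((n - 1) * r) + r := by
      rw [hs]; ring
    rw [hx, zpow_add, ha', one_mul]
  have comp : ∀ x y : G, ∀ t : ℤ, (x * y) * a ^ t * (x * y)⁻¹ = x * (y * a ^ t * y⁻¹) * x⁻¹ := by
    intro x y t; group
  have invc : ∀ x : G, ∀ t u : ℤ, x * a ^ t * x⁻¹ = a ^ u → x⁻¹ * a ^ u * x⁻¹⁻¹ = a ^ t := by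
    intro x t u h; rw [← h]; group
  have main : ∀ g : G,
      (g * a ^ r * g⁻¹ = a ^ r ∧ g * a ^ s * g⁻¹ = a ^ s) ∨
      (g * a ^ r * g⁻¹ = a ^ s ∧ g * a ^ s * g⁻¹ = a ^ r) := by
    intro g
    have hg : g ∈ Subgroup.closure ({a, b} : Set G) := by rw [hgen]; trivial
    induction hg using Subgroup.closure_induction with
    | mem x hx =>
      rcases hx with rfl | rfl
      · left; constructor <;> group
      · right; exact ⟨key1 r, by rw [key1 s, key2]⟩
    | one => left; simp
    | mul x y hxm hym ihx ihy =>
      rcases ihx with ⟨hx1, hx2⟩ | ⟨hx1, hx2⟩ <;>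
        rcases ihy with ⟨hy1, hy2⟩ | ⟨hy1, hy2⟩ <;>
          simp only [comp, hy1, hy2] <;> tauto
    | inv x hxm ihx =>
      rcases ihx with ⟨hx1, hx2⟩ | ⟨hx1, hx2⟩
      · left; exact ⟨invc x r r hx1, invc x s s hx2⟩
      · right; exact ⟨invc x s r hx2, invc x r s hx1⟩
  ext x
  constructor
  · rintro ⟨g, rfl⟩
    rcases main g with ⟨h, -⟩ | ⟨h, -⟩
    · left; exact h
    · right; exact h
  · rintro (rfl | rfl)
    · exact ⟨1, by group⟩
    · exact ⟨b, (key1 r).symm⟩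
end

section
/- Let n ≥ 2 and let r be odd. The permutation σ of Z/4nZ defined by σ(t) = (2n-1)t + r satisfies σ⁴ = id and has no fixed points and no 2-cycles; hence its disjoint cycle decomposition consists of exactly n cycles, each of length 4. -/
/-- For `n ≥ 2` and odd `r`, the permutation `σ` of `ℤ/4nℤ` with `σ(t) = (2n-1)t + r`
satisfies `σ⁴ = id`, has no fixed points and no 2-cycles, and its disjoint cycle
decomposition consists of exactly `n` cycles, each of length 4. -/
theorem cycles_of_odd_r (n : ℕ) [NeZero n] (hn : 2 ≤ n) (r : ℤ) (hrodd : Odd r)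
    (σ : Equiv.Perm (ZMod (4 * n)))
    (hσ : ∀ t : ZMod (4 * n), σ t = ((2 * n - 1 : ℕ) : ZMod (4 * n)) * t + (r : ZMod (4 * n))) :
    σ ^ 4 = 1 ∧ (∀ t : ZMod (4 * n), σ t ≠ t) ∧ (∀ t : ZMod (4 * n), σ (σ t) ≠ t) ∧
      σ.cycleType = Multiset.replicate n 4 := by
  have hNZ : NeZero (4 * n) := ⟨by omega⟩
  obtain ⟨k, hk⟩ := hrodd
  have h4n : ((4 * n : ℕ) : ZMod (4 * n)) = 0 := ZMod.natCast_self _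
  have h4n' : (4 : ZMod (4 * n)) * (n : ZMod (4 * n)) = 0 := by push_cast at h4n; exact h4n
  have ha : ((2 * n - 1 : ℕ) : ZMod (4 * n)) = 2 * (n : ZMod (4 * n)) - 1 := by
    rw [Nat.cast_sub (by omega : 1 ≤ 2 * n)]; push_cast; ring
  have hr : (r : ZMod (4 * n)) = 2 * (k : ZMod (4 * n)) + 1 := by rw [hk]; push_cast; ring
  -- σ² t = t + 2n
  have hσ2 : ∀ t : ZMod (4 * n), σ (σ t) = t + 2 * (n : ZMod (4 * n)) := by
    intro t
    rw [hσ, hσ, ha, hr]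
    linear_combination ((n : ZMod (4 * n)) - 1) * t * h4n' + (k : ZMod (4 * n)) * h4n'
  have hσ4 : σ ^ 4 = 1 := by
    ext t
    have h1 : (σ ^ 4) t = σ (σ (σ (σ t))) := by
      simp [pow_succ, Equiv.Perm.mul_apply]
    rw [h1, hσ2, hσ2]
    simp only [Equiv.Perm.one_apply]
    linear_combination h4n'
  -- no fixed points
  have hfix : ∀ t : ZMod (4 * n), σ t ≠ t := by
    intro t h
    rw [hσ] at h
    have h2 : (2 : ℕ) ∣ 4 * n := ⟨2 * n, by ring⟩
    have h' := congrArg (ZMod.castHom h2 (ZMod 2)) h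
    simp only [map_add, map_mul, map_natCast, map_intCast] at h'
    rw [hk] at h'
    have e1 : ((2 * n - 1 : ℕ) : ZMod 2) = 1 := by
      rw [Nat.cast_sub (by omega : 1 ≤ 2 * n)]
      push_cast
      have : (2 : ZMod 2) = 0 := by decide
      rw [this]; ring_nf; decide
    have e2 : ((2 * k + 1 : ℤ) : ZMod 2) = 1 := by
      push_cast
      have : (2 : ZMod 2) = 0 := by decide
      rw [this]; ring
    rw [e1, e2, one_mul] at h'
    have : (1 : ZMod 2) = 0 := by linear_combination h'
    exact one_ne_zero this
  -- no 2-cycles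
  have h2n : (2 : ZMod (4 * n)) * (n : ZMod (4 * n)) ≠ 0 := by
    intro h
    have : ((2 * n : ℕ) : ZMod (4 * n)) = 0 := by push_cast; linear_combination h
    rw [ZMod.natCast_eq_zero_iff] at this
    exact absurd (Nat.le_of_dvd (by omega) this) (by omega)
  have h2cyc : ∀ t : ZMod (4 * n), σ (σ t) ≠ t := by
    intro t h
    rw [hσ2] at h
    apply h2n
    linear_combination h
  -- cycle type
  have hsupp : σ.support = Finset.univ := by
    ext t; simp [Equiv.Perm.mem_support, hfix t]
  have hsum : σ.cycleType.sum = 4 * n := by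
    rw [Equiv.Perm.sum_cycleType, hsupp]
    simp [ZMod.card]
  have hmem : ∀ a ∈ σ.cycleType, a = 4 := by
    intro a hamem
    have h2le := Equiv.Perm.two_le_of_mem_cycleType hamem
    have hdvd : a ∣ 4 := by
      have hl := Equiv.Perm.lcm_cycleType σ
      have hord : orderOf σ ∣ 4 := orderOf_dvd_of_pow_eq_one hσ4
      exact (Multiset.dvd_lcm hamem).trans (hl ▸ hord)
    have ha4 : a = 2 ∨ a = 4 := by
      have hle := Nat.le_of_dvd (by norm_num) hdvd
      interval_cases a
      · left; rfl
      · exact absurd hdvd (by decide)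
      · right; rfl
    rcases ha4 with h2 | h4
    · -- a 2-cycle would exist
      exfalso
      subst h2
      rw [Equiv.Perm.cycleType_def, Multiset.mem_map] at hamem
      obtain ⟨c, hc, hcard⟩ := hamem
      rw [Finset.mem_val, Equiv.Perm.mem_cycleFactorsFinset_iff] at hc
      obtain ⟨hcyc, hagree⟩ := hc
      have hswap : c.IsSwap := Equiv.Perm.card_support_eq_two.mp hcard
      obtain ⟨x, y, hxy, hcswap⟩ := hswap
      have hx : x ∈ c.support := by
        rw [hcswap, Equiv.Perm.support_swap hxy]; simp
      have hy : y ∈ c.support := by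
        rw [hcswap, Equiv.Perm.support_swap hxy]; simp
      have hσx : σ x = y := by
        rw [← hagree x hx, hcswap, Equiv.swap_apply_left]
      have hσy : σ y = x := by
        rw [← hagree y hy, hcswap, Equiv.swap_apply_right]
      exact h2cyc x (by rw [hσx, hσy])
    · exact h4
  have hrep := Multiset.eq_replicate_card.mpr hmem
  have hcard : Multiset.card σ.cycleType = n := by
    rw [hrep, Multiset.sum_replicate, smul_eq_mul] at hsum
    omega
  exact ⟨hσ4, hfix, h2cyc, by rw [hrep, hcard]⟩
end

section
/- Let n ≥ 1 and let h be an integer with 1 ≤ h < 2n. There exist integers t₁, t₂ with 0 ≤ t₁, t₂ < 4n such that cos((t₁ - t₂)·h·π / (2n)) = 0 if and only if ν₂(h) < ν₂(2n), where ν₂ denotes the 2-adic valuation. -/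
/-- For `n ≥ 1` and `1 ≤ h < 2n`, there exist `t₁, t₂` with `0 ≤ t₁, t₂ < 4n` and
`cos((t₁ - t₂)·h·π/(2n)) = 0` if and only if `ν₂(h) < ν₂(2n)`, where `ν₂` is the 2-adic
valuation. -/
theorem exists_cos_eq_zero_iff (n h : ℕ) (hn : 1 ≤ n) (h1 : 1 ≤ h) (h2 : h < 2 * n) :
    (∃ t₁ t₂ : ℤ, 0 ≤ t₁ ∧ t₁ < 4 * n ∧ 0 ≤ t₂ ∧ t₂ < 4 * n ∧
      Real.cos (((t₁ - t₂ : ℤ) : ℝ) * h * Real.pi / (2 * n)) = 0) ↔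
    padicValNat 2 h < padicValNat 2 (2 * n) := by
  have hn0 : n ≠ 0 := by omega
  have hh0 : h ≠ 0 := by omega
  have hnR : (0 : ℝ) < (n : ℝ) := by exact_mod_cast hn
  have h2n : padicValNat 2 (2 * n) = 1 + padicValNat 2 n := by
    rw [padicValNat.mul (by norm_num) hn0, padicValNat.self (by norm_num)]
  constructor
  · rintro ⟨t₁, t₂, _, _, _, _, hcos⟩
    rw [Real.cos_eq_zero_iff] at hcos
    obtain ⟨k, hk⟩ := hcos
    rw [div_eq_div_iff (by linarith) (by norm_num)] at hk
    have key : (t₁ - t₂) * (h : ℤ) = (2 * k + 1) * n := by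
      have hR : (((t₁ - t₂) * h * 2 : ℤ) : ℝ) = (((2 * k + 1) * (2 * n) : ℤ) : ℝ) := by
        push_cast at hk ⊢
        apply mul_left_cancel₀ Real.pi_ne_zero
        linear_combination hk
      have h3 : (t₁ - t₂) * h * 2 = (2 * k + 1) * (2 * n) := by exact_mod_cast hR
      linarith
    set d : ℤ := t₁ - t₂ with hd
    have hdne : d ≠ 0 := by
      intro h0
      rw [h0, zero_mul] at key
      have hodd : (2 * k + 1) ≠ 0 := by omega
      have hnZ : (n : ℤ) ≠ 0 := by exact_mod_cast hn0
      exact (mul_ne_zero hodd hnZ) key.symm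
    have hnat : d.natAbs * h = (2 * k + 1).natAbs * n := by
      have := congrArg Int.natAbs key
      simpa [Int.natAbs_mul] using this
    have hoddn : ¬ (2 : ℕ) ∣ (2 * k + 1).natAbs := by
      rintro ⟨c, hc⟩
      omega
    have hko : (2 * k + 1).natAbs ≠ 0 := by omega
    have hval := congrArg (padicValNat 2) hnat
    rw [padicValNat.mul (by simpa [Int.natAbs_eq_zero] using hdne) hh0,
        padicValNat.mul hko hn0,
        padicValNat.eq_zero_of_not_dvd hoddn] at hval
    omega
  · intro hlt
    set a := padicValNat 2 h with ha
    have hab : a ≤ padicValNat 2 n := by omega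
    have hdvd_h : (2 : ℕ) ^ a ∣ h := pow_padicValNat_dvd
    have hdvd_n : (2 : ℕ) ^ a ∣ n :=
      dvd_trans (pow_dvd_pow 2 hab) pow_padicValNat_dvd
    set t : ℕ := n / 2 ^ a with ht
    have htmul : t * 2 ^ a = n := Nat.div_mul_cancel hdvd_n
    have hth : t * h = n * (h / 2 ^ a) := by
      conv_lhs => rw [← Nat.div_mul_cancel hdvd_h]
      rw [← mul_assoc, ← htmul]; ring
    have hodd : ¬ (2 : ℕ) ∣ h / 2 ^ a := by
      have h' := Nat.not_dvd_ordCompl Nat.prime_two hh0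
      rwa [Nat.factorization_def h Nat.prime_two] at h'
    obtain ⟨m, hm⟩ : ∃ m : ℕ, h / 2 ^ a = 2 * m + 1 := by
      rcases Nat.even_or_odd (h / 2 ^ a) with he | ho
      · exact absurd he.two_dvd hodd
      · exact ho
    have htpos : 0 < t := Nat.div_pos (Nat.le_of_dvd (by omega) hdvd_n) (by positivity)
    refine ⟨(t : ℤ), 0, by positivity, ?_, le_refl 0, by positivity, ?_⟩
    · have : t ≤ n := Nat.div_le_self n _
      push_cast; omega
    · rw [Real.cos_eq_zero_iff]
      refine ⟨(m : ℤ), ?_⟩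
      have hthR : (t : ℝ) * h = n * (2 * m + 1) := by
        have hnn : (t * h : ℕ) = (n * (2 * m + 1) : ℕ) := by rw [hth, hm]
        exact_mod_cast hnn
      push_cast
      rw [div_eq_div_iff (by linarith) (by norm_num)]
      linear_combination (2 * Real.pi) * hthR
end
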